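/- Let p be a prime or p = ∞. Assume the law μ of (a₁,b₁) is nondegenerate, E[|log|a₁|_p|] < ∞, E[log⁺|b₁|_p] < ∞, and φ_p = E[log|a₁|_p] < 0. Then the law ν_p of the almost sure limit Z_∞^p = Σ_{k=1}^∞ a₁⋯a_{k−1} b_k in ℚ_p carries no point mass: ν_p({z}) = 0 for every z ∈ ℚ_p. -/

import Mathlib

open MeasureTheory ProbabilityTheory Filter Topology
open scoped ENNReal

/-- Every subset of a countable type with measurable singletons is measurable. -/
lemma aux_measurableSet_countable {α : Type*} [MeasurableSpace α] [Countable α]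
    [MeasurableSingletonClass α] (s : Set α) : MeasurableSet s :=
  (Set.to_countable s).measurableSet

/-- The basic algebraic recursion for the partial sums of the perpetuity. -/
lemma aux_sum_rec (a b : ℕ → ℚ) (n : ℕ) :
    (∑ k ∈ Finset.range (n + 1), (∏ j ∈ Finset.range k, a j) * b k) =
      b 0 + a 0 * ∑ k ∈ Finset.range n, (∏ j ∈ Finset.range k, a (j + 1)) * b (k + 1) := by
  rw [Finset.sum_range_succ', Finset.mul_sum]
  simp only [Finset.range_zero, Finset.prod_empty, one_mul]
  rw [add_comm]
  congr 1
  refine Finset.sum_congr rfl fun k hk => ?_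
  rw [Finset.prod_range_succ']
  ring

/-- With `K` a complete normed field realizing a place of `ℚ`
(a prime `p` or `p = ∞`) and `(aₙ, bₙ)` i.i.d. in `ℚ* × ℚ` with nondegenerate
common law (`P[a₁ = 1] < 1` and `P[a₁ z + b₁ = z] < 1` for every `z ∈ ℚ`), assume
`E[|log |a₁|_p|] < ∞`, `E[log⁺ |b₁|_p] < ∞` and `φ_p = E[log |a₁|_p] < 0`.  Then the
law `ν_p` of the a.s. limit `Z_∞^p` of `B_n = Σ_{k=1}^n a₁⋯a_{k-1} b_k` has no atom:
`ν_p({z}) = 0` for every `z ∈ ℚ_p`. -/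
theorem statement3
    {Ω : Type*} [MeasureSpace Ω] [IsProbabilityMeasure (ℙ : Measure Ω)]
    (a b : ℕ → Ω → ℚ)
    (hmeas : ∀ n, Measurable fun ω => (a n ω, b n ω))
    (hindep : iIndepFun (fun n ω => (a n ω, b n ω)) ℙ)
    (hident : ∀ n, IdentDistrib (fun ω => (a n ω, b n ω)) (fun ω => (a 0 ω, b 0 ω)) ℙ ℙ)
    (hne : ∀ n ω, a n ω ≠ 0)
    (hnondeg₁ : ℙ {ω | a 0 ω = 1} < 1)
    (hnondeg₂ : ∀ z : ℚ, ℙ {ω | a 0 ω * z + b 0 ω = z} < 1)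
    {K : Type*} [NormedField K] [CompleteSpace K] [MeasurableSpace K] [BorelSpace K]
    (ι : ℚ →+* K) (hdense : DenseRange ι)
    (hplace : (∀ q : ℚ, ‖ι q‖ = |(q : ℝ)|) ∨
      ∃ p : ℕ, p.Prime ∧ ∀ q : ℚ, ‖ι q‖ = (padicNorm p q : ℝ))
    (hInta : Integrable (fun ω => Real.log ‖ι (a 0 ω)‖) ℙ)
    (hIntb : Integrable (fun ω => max (Real.log ‖ι (b 0 ω)‖) 0) ℙ)
    (hdrift : ∫ ω, Real.log ‖ι (a 0 ω)‖ ∂ℙ < 0)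
    (Z : Ω → K)
    (hZ : ∀ᵐ ω ∂ℙ,
      Tendsto (fun n => ι (∑ k ∈ Finset.range n, (∏ j ∈ Finset.range k, a j ω) * b k ω))
        atTop (𝓝 (Z ω))) :
    ∀ z : K, Measure.map Z ℙ {z} = 0 := by
  classical
  -- injectivity of the embedding
  have hι : Function.Injective ι := ι.injective
  have hι0 : ∀ q : ℚ, q ≠ 0 → ι q ≠ 0 := by
    intro q hq h
    exact hq (hι (by rw [h, map_zero]))
  -- K is a Polish space
  haveI : TopologicalSpace.SeparableSpace K :=
    ⟨⟨Set.range ι, Set.countable_range ι, hdense⟩⟩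
  haveI : PolishSpace K := inferInstance
  -- notation
  set f : ℕ → Ω → ℚ × ℚ := fun n ω => (a n ω, b n ω) with hfdef
  have hfm : ∀ n, Measurable (f n) := hmeas
  set X : Ω → (ℕ → ℚ × ℚ) := fun ω n => f n ω with hXdef
  set X' : Ω → (ℕ → ℚ × ℚ) := fun ω n => f (n + 1) ω with hX'def
  have hXm : Measurable X := measurable_pi_lambda _ fun n => hfm n
  have hX'm : Measurable X' := measurable_pi_lambda _ fun n => hfm (n + 1)
  -- the partial-sum functionals on the sequence space
  set g : ℕ → (ℕ → ℚ × ℚ) → K := fun n x =>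
    ι (∑ k ∈ Finset.range n, (∏ j ∈ Finset.range k, (x j).1) * (x k).2) with hgdef
  have hgm : ∀ n, Measurable (g n) := by
    intro n
    have h1 : Measurable fun x : ℕ → ℚ × ℚ => (Finset.range n).restrict x :=
      Finset.measurable_restrict _
    have h2 : Measurable fun y : (∀ _ : (Finset.range n : Finset ℕ), ℚ × ℚ) =>
        ι (∑ k ∈ Finset.range n,
          (∏ j ∈ Finset.range k,
            (if h : j ∈ Finset.range n then y ⟨j, h⟩ else (0, 0)).1) *
          (if h : k ∈ Finset.range n then y ⟨k, h⟩ else (0, 0)).2) :=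
      measurable_of_countable _
    have heq : g n = (fun y : (∀ _ : (Finset.range n : Finset ℕ), ℚ × ℚ) =>
        ι (∑ k ∈ Finset.range n,
          (∏ j ∈ Finset.range k,
            (if h : j ∈ Finset.range n then y ⟨j, h⟩ else (0, 0)).1) *
          (if h : k ∈ Finset.range n then y ⟨k, h⟩ else (0, 0)).2)) ∘
        (fun x : ℕ → ℚ × ℚ => (Finset.range n).restrict x) := by
      funext x
      simp only [Function.comp_apply, hgdef]
      congr 1
      refine Finset.sum_congr rfl fun k hk => ?_
      rw [dif_pos hk]
      congr 1
      refine Finset.prod_congr rfl fun j hj => ?_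
      have hjn : j ∈ Finset.range n :=
        Finset.mem_range.2 (lt_trans (Finset.mem_range.1 hj) (Finset.mem_range.1 hk))
      rw [dif_pos hjn]
      rfl
    rw [heq]
    exact h2.comp h1
  -- the set of convergence is measurable
  have hC : MeasurableSet {x : ℕ → ℚ × ℚ | ∃ c, Tendsto (fun n => g n x) atTop (𝓝 c)} :=
    measurableSet_exists_tendsto hgm
  -- laws of the two shifted processes agree
  have key : ∀ (r : ℕ → ℕ), Function.Injective r → ∀ (S : Finset ℕ) (t : ℕ → ℚ × ℚ),
      ℙ (⋂ i ∈ S, f (r i) ⁻¹' {t i}) = ∏ i ∈ S, ℙ (f 0 ⁻¹' {t i}) := by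
    intro r hr S t
    set sets : ℕ → Set (ℚ × ℚ) := fun m => ⋂ i ∈ S, ⋂ (_ : r i = m), {t i} with hsets
    have h1 : (⋂ i ∈ S, f (r i) ⁻¹' {t i}) = ⋂ m ∈ S.image r, f m ⁻¹' sets m := by
      ext ω
      simp only [Set.mem_iInter, Set.mem_preimage, Finset.mem_image, hsets,
        Set.mem_singleton_iff]
      constructor
      · rintro h m ⟨i, hi, rfl⟩ j hj hrji
        rw [hr hrji] at hj ⊢
        exact h _ hj
      · intro h i hi
        exact h (r i) ⟨i, hi, rfl⟩ i hi rfl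
    have h2 : ∀ i ∈ S, sets (r i) = {t i} := by
      intro i hi
      ext p
      simp only [hsets, Set.mem_iInter, Set.mem_singleton_iff]
      constructor
      · intro h; exact h i hi rfl
      · rintro rfl j hj hrji
        rw [hr hrji]
    rw [h1, hindep.measure_inter_preimage_eq_mul _
      (fun i _ => aux_measurableSet_countable _),
      Finset.prod_image (fun i _ j _ h => hr h)]
    refine Finset.prod_congr rfl fun i hi => ?_
    rw [h2 i hi]
    exact (hident (r i)).measure_mem_eq (aux_measurableSet_countable _)
  have hPP' : Measure.map X ℙ = Measure.map X' ℙ := by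
    haveI h1 : IsProbabilityMeasure (Measure.map X ℙ) :=
      Measure.isProbabilityMeasure_map hXm.aemeasurable
    haveI h2 : IsProbabilityMeasure (Measure.map X' ℙ) :=
      Measure.isProbabilityMeasure_map hX'm.aemeasurable
    refine ext_of_generate_finite (measurableCylinders (fun _ : ℕ => ℚ × ℚ))
      generateFrom_measurableCylinders.symm isPiSystem_measurableCylinders ?_
      (measure_univ.trans measure_univ.symm)
    intro s hs
    obtain ⟨S, T, hT, rfl⟩ := (mem_measurableCylinders _).1 hs
    have hrXm : Measurable fun ω => S.restrict (X ω) := (S.measurable_restrict).comp hXm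
    have hrX'm : Measurable fun ω => S.restrict (X' ω) := (S.measurable_restrict).comp hX'm
    have hmapeq : Measure.map (fun ω => S.restrict (X ω)) ℙ
        = Measure.map (fun ω => S.restrict (X' ω)) ℙ := by
      refine Measure.ext_of_singleton fun t => ?_
      have htm : MeasurableSet ({t} : Set (∀ _ : (S : Finset ℕ), ℚ × ℚ)) :=
        MeasurableSet.singleton t
      set tt : ℕ → ℚ × ℚ := fun m => if h : m ∈ S then t ⟨m, h⟩ else (0, 0) with htt
      have hpre : ∀ Y : Ω → (ℕ → ℚ × ℚ),
          (fun ω => S.restrict (Y ω)) ⁻¹' {t} = ⋂ i ∈ S, (fun ω => Y ω i) ⁻¹' {tt i} := by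
        intro Y
        ext ω
        simp only [Set.mem_preimage, Set.mem_singleton_iff, Set.mem_iInter, funext_iff,
          Finset.restrict]
        constructor
        · intro h i hi
          rw [htt]
          simp only [dif_pos hi]
          exact h ⟨i, hi⟩
        · intro h i
          have h' := h i i.2
          rw [htt] at h'
          simpa only [dif_pos i.2] using h'
      rw [Measure.map_apply hrXm htm, Measure.map_apply hrX'm htm, hpre X, hpre X']
      have e1 : (⋂ i ∈ S, (fun ω => X ω i) ⁻¹' {tt i}) = ⋂ i ∈ S, f i ⁻¹' {tt i} := rfl
      have e2 : (⋂ i ∈ S, (fun ω => X' ω i) ⁻¹' {tt i}) = ⋂ i ∈ S, f (i + 1) ⁻¹' {tt i} := rfl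
      rw [e1, e2, key (fun m => m) (fun x y h => h) S tt,
        key (fun m => m + 1) (fun x y h => by exact Nat.succ_injective h) S tt]
    calc Measure.map X ℙ (cylinder S T) = ℙ ((fun ω => S.restrict (X ω)) ⁻¹' T) := by
          rw [Measure.map_apply hXm (hT.cylinder S)]; rfl
    _ = Measure.map (fun ω => S.restrict (X ω)) ℙ T := (Measure.map_apply hrXm hT).symm
    _ = Measure.map (fun ω => S.restrict (X' ω)) ℙ T := by rw [hmapeq]
    _ = ℙ ((fun ω => S.restrict (X' ω)) ⁻¹' T) := Measure.map_apply hrX'm hT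
    _ = Measure.map X' ℙ (cylinder S T) := by
          rw [Measure.map_apply hX'm (hT.cylinder S)]; rfl
  -- construct the measurable limit functional
  have hPC : ∀ᵐ x ∂(Measure.map X ℙ), ∃ c, Tendsto (fun n => g n x) atTop (𝓝 c) := by
    rw [ae_map_iff hXm.aemeasurable hC]
    filter_upwards [hZ] with ω h
    exact ⟨Z ω, h⟩
  obtain ⟨W, hWm, hWt⟩ := measurable_limit_of_tendsto_metrizable_ae
    (fun n => (hgm n).aemeasurable) hPC
  have hWX : ∀ᵐ ω ∂ℙ, Tendsto (fun n => g n (X ω)) atTop (𝓝 (W (X ω))) :=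
    ae_of_ae_map hXm.aemeasurable hWt
  have hWX' : ∀ᵐ ω ∂ℙ, Tendsto (fun n => g n (X' ω)) atTop (𝓝 (W (X' ω))) :=
    ae_of_ae_map hX'm.aemeasurable (hPP' ▸ hWt)
  have hZeq : Z =ᵐ[ℙ] fun ω => W (X ω) := by
    filter_upwards [hZ, hWX] with ω h1 h2
    exact tendsto_nhds_unique h1 h2
  set Z'' : Ω → K := fun ω => W (X' ω) with hZ''def
  have hZ''m : Measurable Z'' := hWm.comp hX'm
  -- a.e. recursion : Z = ι a₀ · Z'' + ι b₀
  have hZrec : ∀ᵐ ω ∂ℙ, Z ω = ι (a 0 ω) * Z'' ω + ι (b 0 ω) := by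
    filter_upwards [hZ, hWX'] with ω h1 h2
    have h3 : Tendsto (fun n => ι (∑ k ∈ Finset.range (n + 1),
        (∏ j ∈ Finset.range k, a j ω) * b k ω)) atTop (𝓝 (Z ω)) :=
      h1.comp (tendsto_add_atTop_nat 1)
    have h4 : ∀ n, ι (∑ k ∈ Finset.range (n + 1), (∏ j ∈ Finset.range k, a j ω) * b k ω)
        = ι (b 0 ω) + ι (a 0 ω) * g n (X' ω) := by
      intro n
      rw [aux_sum_rec (fun j => a j ω) (fun k => b k ω) n, map_add, map_mul]
    have h5 : Tendsto (fun n => ι (b 0 ω) + ι (a 0 ω) * g n (X' ω)) atTop (𝓝 (Z ω)) := by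
      simpa only [h4] using h3
    have h6 : Tendsto (fun n => ι (b 0 ω) + ι (a 0 ω) * g n (X' ω)) atTop
        (𝓝 (ι (b 0 ω) + ι (a 0 ω) * W (X' ω))) :=
      tendsto_const_nhds.add (tendsto_const_nhds.mul h2)
    have h7 := tendsto_nhds_unique h5 h6
    rw [h7]; ring
  have hZae : AEMeasurable Z ℙ := (hWm.comp hXm).aemeasurable.congr hZeq.symm
  set ν : Measure K := Measure.map Z ℙ with hν
  haveI hνP : IsProbabilityMeasure ν := Measure.isProbabilityMeasure_map hZae
  set κ : Measure (ℚ × ℚ) := Measure.map (f 0) ℙ with hκ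
  haveI hκP : IsProbabilityMeasure κ := Measure.isProbabilityMeasure_map (hfm 0).aemeasurable
  have hνZ'' : Measure.map Z'' ℙ = ν := by
    rw [hν, Measure.map_congr hZeq]
    calc Measure.map Z'' ℙ = Measure.map W (Measure.map X' ℙ) :=
          (Measure.map_map hWm hX'm).symm
    _ = Measure.map W (Measure.map X ℙ) := by rw [hPP']
    _ = Measure.map (fun ω => W (X ω)) ℙ := Measure.map_map hWm hXm
  -- independence of (a₀, b₀) and Z''
  have hbig : Indep (⨆ i ∈ ({0} : Set ℕ), MeasurableSpace.comap (f i) inferInstance)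
      (⨆ i ∈ {i : ℕ | 1 ≤ i}, MeasurableSpace.comap (f i) inferInstance) ℙ :=
    indep_iSup_of_disjoint (fun i => measurable_iff_comap_le.1 (hfm i)) hindep
      (by
        rw [Set.disjoint_left]
        rintro x hx h1
        rw [Set.mem_singleton_iff] at hx
        rw [hx] at h1
        exact absurd h1 (by simp))
  have hIndep : IndepFun (f 0) Z'' ℙ := by
    have hA : MeasurableSpace.comap (f 0) inferInstance
        ≤ ⨆ i ∈ ({0} : Set ℕ), MeasurableSpace.comap (f i) inferInstance :=
      le_iSup₂ (f := fun (i : ℕ) (_ : i ∈ ({0} : Set ℕ)) =>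
        MeasurableSpace.comap (f i) inferInstance) 0 rfl
    have hB : MeasurableSpace.comap Z'' inferInstance
        ≤ ⨆ i ∈ {i : ℕ | 1 ≤ i}, MeasurableSpace.comap (f i) inferInstance := by
      have e : MeasurableSpace.comap Z'' (inferInstance : MeasurableSpace K)
          = MeasurableSpace.comap X' (MeasurableSpace.comap W inferInstance) :=
        MeasurableSpace.comap_comp.symm
      rw [e]
      refine le_trans (MeasurableSpace.comap_mono (measurable_iff_comap_le.1 hWm)) ?_
      have e2 : MeasurableSpace.comap X' (inferInstance : MeasurableSpace (ℕ → ℚ × ℚ))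
          = ⨆ n : ℕ, MeasurableSpace.comap (fun ω => X' ω n) inferInstance := by
        rw [show (inferInstance : MeasurableSpace (ℕ → ℚ × ℚ))
            = ⨆ n : ℕ, MeasurableSpace.comap (fun x : ℕ → ℚ × ℚ => x n)
              (inferInstance : MeasurableSpace (ℚ × ℚ)) from rfl,
          MeasurableSpace.comap_iSup]
        exact iSup_congr fun n => MeasurableSpace.comap_comp
      rw [e2]
      exact iSup_le fun n => le_iSup₂ (f := fun (i : ℕ) (_ : i ∈ {i : ℕ | 1 ≤ i}) =>
        MeasurableSpace.comap (f i) inferInstance) (n + 1) (by simp)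
    exact indep_of_indep_of_le_right (indep_of_indep_of_le_left hbig hA) hB
  have hjoint : Measure.map (fun ω => (f 0 ω, Z'' ω)) ℙ = κ.prod ν := by
    rw [hκ, ← hνZ'']
    exact (indepFun_iff_map_prod_eq_prod_map_map (hfm 0).aemeasurable
      hZ''m.aemeasurable).1 hIndep
  -- the stationarity identity for atoms
  have hstat : ∀ z : K, ν {z} = ∫⁻ q, ν {(z - ι q.2) / ι q.1} ∂κ := by
    intro z
    have hSSeq : {p : (ℚ × ℚ) × K | p.2 = (z - ι p.1.2) / ι p.1.1}
        = ⋃ q : ℚ × ℚ, {q} ×ˢ {(z - ι q.2) / ι q.1} := by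
      ext p
      simp only [Set.mem_setOf_eq, Set.mem_iUnion, Set.mem_prod, Set.mem_singleton_iff]
      constructor
      · intro h; exact ⟨p.1, rfl, h⟩
      · rintro ⟨q, h1, h2⟩; rw [h2, h1]
    have hSS : MeasurableSet {p : (ℚ × ℚ) × K | p.2 = (z - ι p.1.2) / ι p.1.1} := by
      rw [hSSeq]
      exact MeasurableSet.iUnion fun q =>
        (measurableSet_singleton q).prod (measurableSet_singleton _)
    have hev : ∀ᵐ ω ∂ℙ, (ω ∈ Z ⁻¹' {z} ↔
        ω ∈ (fun ω => (f 0 ω, Z'' ω)) ⁻¹' {p : (ℚ × ℚ) × K | p.2 = (z - ι p.1.2) / ι p.1.1}) := by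
      filter_upwards [hZrec] with ω h
      have hd : ι (a 0 ω) ≠ 0 := hι0 _ (hne 0 ω)
      simp only [Set.mem_preimage, Set.mem_singleton_iff, Set.mem_setOf_eq]
      constructor
      · intro hh
        rw [h] at hh
        rw [eq_div_iff hd]
        linear_combination hh
      · intro hh
        rw [eq_div_iff hd] at hh
        rw [h]
        linear_combination hh
    calc ν {z} = ℙ (Z ⁻¹' {z}) :=
          Measure.map_apply_of_aemeasurable hZae (measurableSet_singleton z)
    _ = ℙ ((fun ω => (f 0 ω, Z'' ω)) ⁻¹'
          {p : (ℚ × ℚ) × K | p.2 = (z - ι p.1.2) / ι p.1.1}) :=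
          measure_congr (Filter.eventuallyEq_set.2 hev)
    _ = Measure.map (fun ω => (f 0 ω, Z'' ω)) ℙ
          {p : (ℚ × ℚ) × K | p.2 = (z - ι p.1.2) / ι p.1.1} :=
          (Measure.map_apply ((hfm 0).prodMk hZ''m) hSS).symm
    _ = (κ.prod ν) {p : (ℚ × ℚ) × K | p.2 = (z - ι p.1.2) / ι p.1.1} := by rw [hjoint]
    _ = ∫⁻ q, ν (Prod.mk q ⁻¹' {p : (ℚ × ℚ) × K | p.2 = (z - ι p.1.2) / ι p.1.1}) ∂κ :=
          Measure.prod_apply hSS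
    _ = ∫⁻ q, ν {(z - ι q.2) / ι q.1} ∂κ := by
          exact lintegral_congr fun q => rfl
  -- suppose there is an atom, and derive a contradiction
  by_contra hcon
  push_neg at hcon
  obtain ⟨z₀, hz₀⟩ := hcon
  set m : ℝ≥0∞ := ⨆ z : K, ν {z} with hm
  have hm1 : m ≤ 1 := iSup_le fun z => prob_le_one
  have hmtop : m ≠ ∞ := (lt_of_le_of_lt hm1 ENNReal.one_lt_top).ne
  have hm0 : m ≠ 0 := by
    intro h
    exact hz₀ (le_antisymm (h ▸ le_iSup (fun z : K => ν {z}) z₀) zero_le)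
  have hhalf : m / 2 < m := ENNReal.half_lt_self hm0 hmtop
  have hhalf0 : m / 2 ≠ 0 := by
    simp only [ne_eq, ENNReal.div_eq_zero_iff, not_or]
    exact ⟨hm0, by norm_num⟩
  have hhalftop : m / 2 ≠ ∞ := by
    refine ne_of_lt (lt_of_le_of_lt ?_ ENNReal.one_lt_top)
    exact le_trans (le_of_lt hhalf) hm1
  set B : Set K := {z | m / 2 < ν {z}} with hB
  obtain ⟨z₁, hz₁⟩ : ∃ z, m / 2 < ν {z} := lt_iSup_iff.1 hhalf
  have hBfin : B.Finite := by
    by_contra hinf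
    obtain ⟨N, hN⟩ : ∃ N : ℕ, 1 / (m / 2) < N :=
      ENNReal.exists_nat_gt (ENNReal.div_lt_top ENNReal.one_ne_top hhalf0).ne
    have hinf' : B.Infinite := hinf
    obtain ⟨s, hsB, hcard⟩ := Set.Infinite.exists_subset_card_eq hinf' N
    have hsum : ν ↑s = ∑ z ∈ s, ν {z} := by
      rw [← Set.biUnion_of_singleton (↑s : Set K)]
      exact measure_biUnion_finset
        (fun x _ y _ hxy => Set.disjoint_singleton.2 hxy)
        (fun z _ => measurableSet_singleton z)
    have h1 : (N : ℝ≥0∞) * (m / 2) ≤ ν ↑s := by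
      rw [hsum]
      calc (N : ℝ≥0∞) * (m / 2) = ∑ _z ∈ s, (m / 2) := by
            rw [Finset.sum_const, hcard, nsmul_eq_mul]
      _ ≤ ∑ z ∈ s, ν {z} := Finset.sum_le_sum fun z hz => le_of_lt (hsB hz)
    have h2 : ν ↑s ≤ 1 := prob_le_one
    have h3 : (1 : ℝ≥0∞) < N * (m / 2) := by
      have := ENNReal.mul_lt_mul_right hhalf0 hhalftop hN
      rw [mul_comm (m / 2), mul_comm (m / 2)] at this
      rwa [ENNReal.div_mul_cancel hhalf0 hhalftop] at this
    exact absurd ((h3.trans_le h1).trans_le h2) (lt_irrefl _)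
  have hz₁mem : z₁ ∈ hBfin.toFinset := hBfin.mem_toFinset.2 hz₁
  have hne' : hBfin.toFinset.Nonempty := ⟨z₁, hz₁mem⟩
  obtain ⟨zstar, hzstar_mem, hzstar⟩ :=
    Finset.exists_mem_eq_sup' hne' (fun z : K => ν {z})
  have hzstarm : ν {zstar} = m := by
    refine le_antisymm (le_iSup (fun z : K => ν {z}) zstar) ?_
    refine iSup_le fun z => ?_
    by_cases hz : z ∈ B
    · rw [← hzstar]
      exact Finset.le_sup' (fun z : K => ν {z}) (hBfin.mem_toFinset.2 hz)
    · have hzle : ν {z} ≤ m / 2 := not_lt.1 hz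
      refine hzle.trans (le_of_lt (lt_of_lt_of_le hz₁ ?_))
      rw [← hzstar]
      exact Finset.le_sup' (fun z : K => ν {z}) hz₁mem
  set A : Set K := {z | ν {z} = m} with hA
  have hAB : A ⊆ B := by
    intro z hz
    have : ν {z} = m := hz
    simp only [hB, Set.mem_setOf_eq, this]
    exact hhalf
  have hAfin : A.Finite := hBfin.subset hAB
  have hAne : zstar ∈ A := hzstarm
  set s : Finset K := hAfin.toFinset with hs
  have hsne : s.Nonempty := ⟨zstar, hAfin.mem_toFinset.2 hAne⟩
  set n : ℕ := s.card with hn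
  have hnne : (n : ℚ) ≠ 0 := Nat.cast_ne_zero.2 (Finset.card_ne_zero.2 hsne)
  have hnneK : (n : K) ≠ 0 := by
    have : ((n : ℚ) : K) ≠ 0 := by
      rw [show ((n : ℚ) : K) = ι (n : ℚ) from (map_ratCast ι _).symm]
      exact hι0 _ hnne
    simpa using this
  set SA : K := ∑ z ∈ s, z with hSA
  -- a.e. every atom of maximal mass is mapped to another one
  have hatomae : ∀ z ∈ A, ∀ᵐ q ∂κ, ((z - ι q.2) / ι q.1) ∈ A := by
    intro z hz
    have hle : (fun q : ℚ × ℚ => ν {(z - ι q.2) / ι q.1}) ≤ᵐ[κ] (fun _ => m) :=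
      ae_of_all _ fun q => le_iSup (fun x : K => ν {x}) _
    have hint1 : ∫⁻ q, ν {(z - ι q.2) / ι q.1} ∂κ = m := by
      rw [← hstat z]; exact hz
    have hconc := ae_eq_of_ae_le_of_lintegral_le hle (by rw [hint1]; exact hmtop)
      aemeasurable_const (by rw [lintegral_const, measure_univ, mul_one, hint1])
    filter_upwards [hconc] with q hq
    exact hq
  have hq0 : ∀ᵐ q ∂κ, q.1 ≠ 0 := by
    have hzero : κ {q : ℚ × ℚ | q.1 = 0} = 0 := by
      rw [hκ, Measure.map_apply (hfm 0) (aux_measurableSet_countable _)]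
      have hempty : (f 0) ⁻¹' {q : ℚ × ℚ | q.1 = 0} = ∅ := by
        ext ω
        simp only [Set.mem_preimage, Set.mem_setOf_eq, Set.mem_empty_iff_false, iff_false]
        exact hne 0 ω
      rw [hempty, measure_empty]
    rw [ae_iff]
    simpa using hzero
  have hkey : ∀ᵐ q ∂κ, ι q.1 * SA + (n : K) * ι q.2 = SA := by
    have hall : ∀ᵐ q ∂κ, ∀ z ∈ A, ((z - ι q.2) / ι q.1) ∈ A :=
      (ae_ball_iff hAfin.countable).2 hatomae
    filter_upwards [hall, hq0] with q hmaps hq1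
    have hd : ι q.1 ≠ 0 := hι0 _ hq1
    have hmapsto : ∀ z ∈ s, ((z - ι q.2) / ι q.1) ∈ s := fun z hz =>
      hAfin.mem_toFinset.2 (hmaps z (hAfin.mem_toFinset.1 hz))
    have hinj : Set.InjOn (fun z : K => (z - ι q.2) / ι q.1) ↑s := by
      intro x _ y _ h
      rw [div_eq_div_iff hd hd] at h
      have h' := mul_right_cancel₀ hd h
      linear_combination h'
    have hbij : Set.BijOn (fun z : K => (z - ι q.2) / ι q.1) ↑s ↑s :=
      ((s.finite_toSet).injOn_iff_bijOn_of_mapsTo (fun x hx => hmapsto x hx)).1 hinj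
    have hsumeq : ∑ z ∈ s, (z - ι q.2) / ι q.1 = SA := by
      rw [hSA]
      exact Finset.sum_nbij (i := fun z : K => (z - ι q.2) / ι q.1) hmapsto hinj
        hbij.surjOn (fun x _ => rfl)
    have hLHS : ∑ z ∈ s, (z - ι q.2) / ι q.1 = (SA - (n : K) * ι q.2) / ι q.1 := by
      rw [← Finset.sum_div, Finset.sum_sub_distrib, Finset.sum_const, ← hSA, ← hn,
        nsmul_eq_mul]
    rw [hLHS, div_eq_iff hd] at hsumeq
    linear_combination -hsumeq
  -- find a point with a ≠ 1 satisfying the fixed-point equation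
  have hone : κ {q : ℚ × ℚ | q.1 = 1} < 1 := by
    rw [hκ, Measure.map_apply (hfm 0) (aux_measurableSet_countable _)]
    exact hnondeg₁
  obtain ⟨qs, hqs1, hqskey⟩ : ∃ q : ℚ × ℚ, q.1 ≠ 1 ∧ ι q.1 * SA + (n : K) * ι q.2 = SA := by
    by_contra hcon2
    push_neg at hcon2
    have h0 : κ {q : ℚ × ℚ | q.1 ≠ 1} = 0 := by
      refine measure_mono_null (fun q hq => hcon2 q hq) ?_
      rw [ae_iff] at hkey
      exact hkey
    have hsum := measure_add_measure_compl (μ := κ)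
      (aux_measurableSet_countable {q : ℚ × ℚ | q.1 = 1})
    rw [measure_univ] at hsum
    have hc : ({q : ℚ × ℚ | q.1 = 1}ᶜ : Set (ℚ × ℚ)) = {q | q.1 ≠ 1} := rfl
    rw [hc, h0, add_zero] at hsum
    exact absurd hsum (ne_of_lt hone)
  have hd1 : (1 : K) - ι qs.1 ≠ 0 := by
    have he : (1 : K) - ι qs.1 = ι (1 - qs.1) := by rw [map_sub, map_one]
    rw [he]
    exact hι0 _ (sub_ne_zero.2 (Ne.symm hqs1))
  set y : ℚ := (n : ℚ) * qs.2 / (1 - qs.1) with hy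
  have hSAy : SA = ι y := by
    rw [hy, map_div₀, map_mul, map_natCast, map_sub, map_one, eq_div_iff hd1]
    linear_combination -hqskey
  set zq : ℚ := y / (n : ℚ) with hzq
  have hfinal : ∀ᵐ q ∂κ, q.1 * zq + q.2 = zq := by
    filter_upwards [hkey] with q hq
    rw [hSAy] at hq
    have h1 : ι (q.1 * y + (n : ℚ) * q.2) = ι y := by
      rw [map_add, map_mul, map_mul, map_natCast]
      exact hq
    have h2 : q.1 * y + (n : ℚ) * q.2 = y := hι h1
    rw [hzq]
    field_simp
    linear_combination h2
  have hκone : κ {q : ℚ × ℚ | q.1 * zq + q.2 = zq} = 1 := by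
    have hcompl : κ {q : ℚ × ℚ | ¬(q.1 * zq + q.2 = zq)} = 0 := by
      rw [ae_iff] at hfinal
      exact hfinal
    have hsum := measure_add_measure_compl (μ := κ)
      (aux_measurableSet_countable {q : ℚ × ℚ | q.1 * zq + q.2 = zq})
    rw [measure_univ] at hsum
    have hc : ({q : ℚ × ℚ | q.1 * zq + q.2 = zq}ᶜ : Set (ℚ × ℚ))
        = {q | ¬(q.1 * zq + q.2 = zq)} := rfl
    rw [hc, hcompl, add_zero] at hsum
    exact hsum
  have hP1 : ℙ {ω | a 0 ω * zq + b 0 ω = zq} = 1 := by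
    rw [← hκone, hκ, Measure.map_apply (hfm 0) (aux_measurableSet_countable _)]
    rfl
  exact absurd hP1 (ne_of_lt (hnondeg₂ zq))
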